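/- Let U and V be random variables on a probability space (Ω, 𝓕, P) taking values in finite types, with P(U = j) > 0 for every j and P(V = j') > 0 for every j', and let Q be the matrix with entries Q(j, j') = P(U = j, V = j') / (√(P(U = j)) · √(P(V = j'))). Then the operator norm of Q with respect to the Euclidean norms is at most 1; that is, for every vector x, ‖Q x‖₂ ≤ ‖x‖₂. Hence every singular value of Q is at most 1. -/
import Mathlib


open MeasureTheory Matrix

/-- for random variables `U, V` with values in finite types and strictly
positive marginal probabilities, the Witsenhausen matrix
`Q(j,j') = P(U = j, V = j') / (√P(U = j) · √P(V = j'))` has operator norm (w.r.t. the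
Euclidean norms) at most `1`: `‖Q x‖₂ ≤ ‖x‖₂` for every vector `x`. Hence every singular
value of `Q` (square root of an eigenvalue of `Qᵀ * Q`) is at most `1`. -/
theorem witsenhausen_operator_norm_le_one {Ω α β : Type*} [MeasurableSpace Ω]
    [Fintype α] [Fintype β] [DecidableEq α] [DecidableEq β]
    [MeasurableSpace α] [MeasurableSingletonClass α]
    [MeasurableSpace β] [MeasurableSingletonClass β]
    (P : Measure Ω) [IsProbabilityMeasure P]
    (U : Ω → α) (V : Ω → β) (hU : Measurable U) (hV : Measurable V)
    (hposU : ∀ j : α, 0 < P (U ⁻¹' {j})) (hposV : ∀ j' : β, 0 < P (V ⁻¹' {j'}))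
    (Q : Matrix α β ℝ)
    (hQdef : ∀ (j : α) (j' : β), Q j j' =
      (P (U ⁻¹' {j} ∩ V ⁻¹' {j'})).toReal /
        (Real.sqrt (P (U ⁻¹' {j})).toReal * Real.sqrt (P (V ⁻¹' {j'})).toReal))
    (hherm : (Qᵀ * Q).IsHermitian) :
    (∀ x : β → ℝ, Real.sqrt (∑ j : α, (Q.mulVec x j) ^ 2) ≤
      Real.sqrt (∑ j' : β, (x j') ^ 2)) ∧
    ∀ i : β, Real.sqrt (hherm.eigenvalues i) ≤ 1 := by
  set p : α → ℝ := fun j => (P (U ⁻¹' {j})).toReal with hp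
  set q : β → ℝ := fun j' => (P (V ⁻¹' {j'})).toReal with hq
  set r : α → β → ℝ := fun j j' => (P (U ⁻¹' {j} ∩ V ⁻¹' {j'})).toReal with hr
  have hrnn : ∀ j j', 0 ≤ r j j' := fun j j' => ENNReal.toReal_nonneg
  have hppos : ∀ j, 0 < p j := fun j =>
    ENNReal.toReal_pos (hposU j).ne' (measure_ne_top P _)
  have hqpos : ∀ j', 0 < q j' := fun j' =>
    ENNReal.toReal_pos (hposV j').ne' (measure_ne_top P _)
  -- row sums
  have hrow : ∀ j, ∑ j', r j j' = p j := by
    intro j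
    have h1 : P (U ⁻¹' {j}) = ∑ j', P (U ⁻¹' {j} ∩ V ⁻¹' {j'}) := by
      rw [← measure_biUnion_finset]
      · congr 1
        ext ω
        simp
      · intro a _ b _ hab
        intro s hsa hsb ω hω
        exact absurd ((hsa hω).2.symm.trans (hsb hω).2) hab
      · intro j' _
        exact ((hU (measurableSet_singleton j)).inter (hV (measurableSet_singleton j')))
    simp only [hr, hp, h1]
    rw [ENNReal.toReal_sum]
    intro a _
    exact measure_ne_top P _
  have hcol : ∀ j', ∑ j, r j j' = q j' := by
    intro j'
    have h1 : P (V ⁻¹' {j'}) = ∑ j, P (U ⁻¹' {j} ∩ V ⁻¹' {j'}) := by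
      rw [← measure_biUnion_finset]
      · congr 1
        ext ω
        simp
      · intro a _ b _ hab
        intro s hsa hsb ω hω
        exact absurd ((hsa hω).1.symm.trans (hsb hω).1) hab
      · intro j _
        exact ((hU (measurableSet_singleton j)).inter (hV (measurableSet_singleton j')))
    simp only [hr, hq, h1]
    rw [ENNReal.toReal_sum]
    intro a _
    exact measure_ne_top P _
  -- key pointwise bound
  have key : ∀ (x : β → ℝ) (j : α),
      (Q.mulVec x j) ^ 2 ≤ ∑ j', r j j' * (x j') ^ 2 / q j' := by
    intro x j
    have hcs := Finset.sum_mul_sq_le_sq_mul_sq Finset.univ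
      (fun j' => Real.sqrt (r j j'))
      (fun j' => Real.sqrt (r j j') * x j' / (Real.sqrt (p j) * Real.sqrt (q j')))
    have hlhs : ∀ j', Real.sqrt (r j j') *
        (Real.sqrt (r j j') * x j' / (Real.sqrt (p j) * Real.sqrt (q j'))) =
        Q j j' * x j' := by
      intro j'
      rw [hQdef j j']
      rw [div_eq_mul_inv, div_eq_mul_inv]
      rw [← mul_assoc, ← mul_assoc, Real.mul_self_sqrt (hrnn j j')]
      ring
    have hsq : ∀ j', (Real.sqrt (r j j'))^2 = r j j' := fun j' =>
      Real.sq_sqrt (hrnn j j')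
    have hgsq : ∀ j', (Real.sqrt (r j j') * x j' / (Real.sqrt (p j) * Real.sqrt (q j')))^2
        = r j j' * (x j')^2 / (p j * q j') := by
      intro j'
      rw [div_pow, mul_pow, mul_pow, hsq, Real.sq_sqrt (hppos j).le,
        Real.sq_sqrt (hqpos j').le]
    simp only [hlhs, hgsq, hsq] at hcs
    rw [hrow j] at hcs
    show (∑ j', Q j j' * x j') ^ 2 ≤ _
    calc (∑ j', Q j j' * x j')^2 ≤ p j * ∑ j', r j j' * (x j')^2 / (p j * q j') := hcs
      _ = ∑ j', r j j' * (x j')^2 / q j' := by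
          rw [Finset.mul_sum]
          refine Finset.sum_congr rfl fun j' _ => ?_
          rw [show r j j' * x j' ^ 2 / (p j * q j') =
              (r j j' * x j' ^ 2 / q j') / p j by rw [div_div, mul_comm (q j') (p j)],
            mul_comm, div_mul_cancel₀ _ (hppos j).ne']
  have hbound : ∀ x : β → ℝ, ∑ j, (Q.mulVec x j)^2 ≤ ∑ j', (x j')^2 := by
    intro x
    calc ∑ j, (Q.mulVec x j)^2 ≤ ∑ j, ∑ j', r j j' * (x j')^2 / q j' :=
          Finset.sum_le_sum fun j _ => key x j
      _ = ∑ j', (∑ j, r j j') * (x j')^2 / q j' := by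
          rw [Finset.sum_comm]
          refine Finset.sum_congr rfl fun j' _ => ?_
          rw [Finset.sum_mul, Finset.sum_div]
      _ = ∑ j', (x j')^2 := by
          refine Finset.sum_congr rfl fun j' _ => ?_
          rw [hcol j', mul_comm, mul_div_assoc, div_self (hqpos j').ne', mul_one]
  constructor
  · intro x
    exact Real.sqrt_le_sqrt (hbound x)
  · intro i
    set v : β → ℝ := ⇑(hherm.eigenvectorBasis i) with hv
    have hmul : (Qᵀ * Q) *ᵥ v = hherm.eigenvalues i • v :=
      hherm.mulVec_eigenvectorBasis i
    have hnorm : ∑ j', (v j')^2 = 1 := by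
      have h1 : ‖hherm.eigenvectorBasis i‖ = 1 :=
        hherm.eigenvectorBasis.orthonormal.1 i
      rw [EuclideanSpace.norm_eq] at h1
      have h2 : ∑ j', ‖hherm.eigenvectorBasis i j'‖^2 = 1 := by
        rw [← Real.sqrt_eq_one]
        exact h1
      simpa [Real.norm_eq_abs, sq_abs] using h2
    have hdot : ∑ j, (Q.mulVec v j)^2 = hherm.eigenvalues i := by
      have h1 : ∑ j, (Q.mulVec v j)^2 = (Q *ᵥ v) ⬝ᵥ (Q *ᵥ v) := by
        simp [dotProduct, sq]
      rw [h1]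
      have h2 : (Q *ᵥ v) ⬝ᵥ (Q *ᵥ v) = v ⬝ᵥ ((Qᵀ * Q) *ᵥ v) := by
        rw [← mulVec_mulVec, dotProduct_mulVec v Qᵀ, vecMul_transpose]
      rw [h2, hmul, dotProduct_smul, smul_eq_mul]
      have h3 : v ⬝ᵥ v = 1 := by
        simpa [dotProduct, sq] using hnorm
      rw [h3, mul_one]
    have : hherm.eigenvalues i ≤ 1 := by
      rw [← hdot]
      calc ∑ j, (Q.mulVec v j)^2 ≤ ∑ j', (v j')^2 := hbound v
        _ = 1 := hnorm
    exact Real.sqrt_le_one.2 this
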